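/- Let ϖ ∈ X be a dominant weight and suppose there is a simple root α_j with (ϖ, α_j∨) > 1. Let λ = wϖ with w ∈ W of minimal length such that λ = wϖ. Let μ ∈ w(ϖ − ω_j) + Wω_j (i.e. μ = w(ϖ − ω_j) + z ω_j for some z ∈ W). Then (μ,μ) ≤ (ϖ,ϖ); and if (μ,μ) = (ϖ,ϖ), then μ = vϖ for some v ∈ W with v ≥ w in the Bruhat order. Consequently μ ≤_a λ. -/

import Mathlib

open scoped InnerProductSpace Classical

noncomputable section

/-- A reduced crystallographic root system `Φ` spanning a finite-dimensional real inner
product space `V`, together with a choice of simple roots `π` (determining the positive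
system), the corresponding fundamental weights `ω`, the reflections `s`, the Weyl group
`W` and the weight lattice `X`. -/
structure RootSystemData (V : Type) [NormedAddCommGroup V] [InnerProductSpace ℝ V]
    [FiniteDimensional ℝ V] where
  /-- the (finite) set of roots -/
  Φ : Finset V
  /-- the rank -/
  r : ℕ
  /-- the simple roots `α₁, …, α_r` -/
  π : Fin r → V
  /-- the fundamental weights `ω₁, …, ω_r` -/
  ω : Fin r → V
  /-- the orthogonal reflection attached to a root -/
  s : V → (V ≃ₗ[ℝ] V)
  /-- the Weyl group -/
  W : Subgroup (V ≃ₗ[ℝ] V)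
  /-- the weight lattice -/
  X : AddSubgroup V
  root_ne_zero : ∀ α ∈ Φ, α ≠ (0 : V)
  root_span : Submodule.span ℝ (Φ : Set V) = ⊤
  reduced : ∀ α ∈ Φ, ∀ c : ℝ, c • α ∈ Φ → c = 1 ∨ c = -1
  crystallographic : ∀ α ∈ Φ, ∀ β ∈ Φ, ∃ n : ℤ, 2 * ⟪β, α⟫_ℝ / ⟪α, α⟫_ℝ = (n : ℝ)
  s_apply : ∀ α ∈ Φ, ∀ v : V, s α v = v - (2 * ⟪v, α⟫_ℝ / ⟪α, α⟫_ℝ) • α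
  refl_stable : ∀ α ∈ Φ, ∀ β ∈ Φ, s α β ∈ Φ
  W_eq : W = Subgroup.closure {g : V ≃ₗ[ℝ] V | ∃ α ∈ Φ, g = s α}
  inner_invariant : ∀ g ∈ W, ∀ u v : V, ⟪g u, g v⟫_ℝ = ⟪u, v⟫_ℝ
  simple_mem : ∀ i, π i ∈ Φ
  simple_indep : LinearIndependent ℝ π
  pos_or_neg : ∀ α ∈ Φ,
      (∃ c : Fin r → ℝ, (∀ i, 0 ≤ c i) ∧ α = ∑ i, c i • π i) ∨
      (∃ c : Fin r → ℝ, (∀ i, 0 ≤ c i) ∧ -α = ∑ i, c i • π i)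
  fund : ∀ i j, 2 * ⟪ω i, π j⟫_ℝ / ⟪π j, π j⟫_ℝ = if i = j then (1 : ℝ) else 0
  X_eq : X = AddSubgroup.closure (Set.range ω)
  X_stable : ∀ g ∈ W, ∀ x ∈ X, g x ∈ X

/-- The pairing `(v, α∨) = 2(v,α)/(α,α)` of a vector with the coroot of `α`. -/
def pairing {V : Type} [NormedAddCommGroup V] [InnerProductSpace ℝ V]
    (v α : V) : ℝ := 2 * ⟪v, α⟫_ℝ / ⟪α, α⟫_ℝ

namespace RootSystemData

variable {V : Type} [NormedAddCommGroup V] [InnerProductSpace ℝ V] [FiniteDimensional ℝ V]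
variable (C : RootSystemData V)

/-- `α` is a nonnegative combination of the simple roots (a positive root, if `α ∈ Φ`). -/
def IsPos (α : V) : Prop := ∃ c : Fin C.r → ℝ, (∀ i, 0 ≤ c i) ∧ α = ∑ i, c i • C.π i

/-- `α` is a nonpositive combination of the simple roots (a negative root, if `α ∈ Φ`). -/
def IsNeg (α : V) : Prop := C.IsPos (-α)

/-- A weight is dominant if it pairs nonnegatively with all simple coroots. -/
def IsDominant (lam : V) : Prop := ∀ i, 0 ≤ pairing lam (C.π i)

/-- The product of the simple reflections along a word. -/
def wordProd (l : List (Fin C.r)) : V ≃ₗ[ℝ] V := (l.map fun i => C.s (C.π i)).prod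

/-- The length of `w`: the least length of an expression of `w` as a product of
simple reflections. -/
def length (w : V ≃ₗ[ℝ] V) : ℕ :=
  sInf {n | ∃ l : List (Fin C.r), l.length = n ∧ C.wordProd l = w}

/-- The (strong) Bruhat order on the Weyl group: `u ≤ v` iff `v` is obtained from `u`
by successively multiplying by reflections, increasing the length at each step. -/
def BruhatLE (u v : V ≃ₗ[ℝ] V) : Prop :=
  Relation.ReflTransGen
    (fun a b => (∃ α ∈ C.Φ, b = a * C.s α) ∧ C.length a < C.length b) u v

/-- The Steinberg weight `e_v = v⁻¹ ⬝ ∑_{i : v⁻¹ α_i < 0} ω_i`. -/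
def steinberg (v : V ≃ₗ[ℝ] V) : V :=
  v⁻¹ (∑ i ∈ Finset.univ.filter (fun i => C.IsNeg (v⁻¹ (C.π i))), C.ω i)

/-- The excellent order on weights: `λ ≤ₑ μ` iff `(λ,λ) < (μ,μ)`, or `λ = wν`, `μ = zν`
for some dominant `ν ∈ X` and `w ≤ z` in the Bruhat order. -/
def ExcLE (lam mu : V) : Prop :=
  ⟪lam, lam⟫_ℝ < ⟪mu, mu⟫_ℝ ∨
    ∃ nu ∈ C.X, C.IsDominant nu ∧
      ∃ w ∈ C.W, ∃ z ∈ C.W, C.BruhatLE w z ∧ lam = w nu ∧ mu = z nu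

/-- The strict excellent order. -/
def ExcLT (lam mu : V) : Prop := C.ExcLE lam mu ∧ lam ≠ mu

/-- The antipodal excellent order: `λ ≤ₐ μ` iff `-λ ≤ₑ -μ`. -/
def AntiLE (lam mu : V) : Prop := C.ExcLE (-lam) (-mu)

/-- The strict antipodal excellent order. -/
def AntiLT (lam mu : V) : Prop := C.AntiLE lam mu ∧ lam ≠ mu

/-- The dominance order: `μ ≤_d ν` iff `ν - μ` is a nonnegative integer combination of
the positive roots. -/
def DomLE (mu nu : V) : Prop :=
  ∃ c : V → ℕ, nu - mu = ∑ α ∈ C.Φ.filter (fun a => C.IsPos a), (c α : ℝ) • α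

theorem omega_mem (i : Fin C.r) : C.ω i ∈ C.X := by
  rw [C.X_eq]; exact AddSubgroup.subset_closure ⟨i, rfl⟩

theorem steinberg_mem {v : V ≃ₗ[ℝ] V} (hv : v ∈ C.W) : C.steinberg v ∈ C.X :=
  C.X_stable _ (inv_mem hv) _ (AddSubgroup.sum_mem _ fun i _ => C.omega_mem i)

/-- The group ring `ℤ[X]` of the weight lattice. -/
abbrev GroupRing := AddMonoidAlgebra ℤ ↥C.X

/-- The basis element `e^λ` of `ℤ[X]`. -/
def expo (x : V) (hx : x ∈ C.X) : C.GroupRing := AddMonoidAlgebra.single ⟨x, hx⟩ 1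

/-- `e^λ`, defined for all `λ : V` (and zero off the lattice). -/
def expoOf (x : V) : C.GroupRing := if hx : x ∈ C.X then C.expo x hx else 0

/-- The coefficient of `e^x` in an element of `ℤ[X]`. -/
def coeff (m : C.GroupRing) (x : ↥C.X) : ℤ := (AddMonoidAlgebra.coeff m : ↥C.X →₀ ℤ) x

/-- The support of an element of `ℤ[X]`. -/
def supp (m : C.GroupRing) : Finset ↥C.X := (AddMonoidAlgebra.coeff m : ↥C.X →₀ ℤ).support

/-- The action of `g ∈ W` on the weight lattice. -/
def actX (g : V ≃ₗ[ℝ] V) (hg : g ∈ C.W) : ↥C.X → ↥C.X :=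
  fun x => ⟨g x, C.X_stable g hg x.1 x.2⟩

/-- The action of `g ∈ W` on `ℤ[X]`, with `e^λ ↦ e^{gλ}`. -/
def wAct (g : V ≃ₗ[ℝ] V) (hg : g ∈ C.W) (m : C.GroupRing) : C.GroupRing :=
  AddMonoidAlgebra.ofCoeff (Finsupp.mapDomain (C.actX g hg) (AddMonoidAlgebra.coeff m))

/-- `m` lies in the invariant subring `ℤ[X]^W`. -/
def IsWInvariant (m : C.GroupRing) : Prop := ∀ g (hg : g ∈ C.W), C.wAct g hg m = m

/-- The parabolic subgroup `W_{Π'}` generated by the simple reflections `s_α, α ∈ Π'`,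
for a subset `Π'` of the simple roots (given by a subset `J` of the index set). -/
def parabolicSubgroup (J : Set (Fin C.r)) : Subgroup (V ≃ₗ[ℝ] V) :=
  Subgroup.closure {g | ∃ i ∈ J, g = C.s (C.π i)}

theorem parabolic_le (J : Set (Fin C.r)) : C.parabolicSubgroup J ≤ C.W := by
  refine (Subgroup.closure_le _).2 ?_
  rintro g ⟨i, _, rfl⟩
  rw [C.W_eq]
  exact Subgroup.subset_closure ⟨C.π i, C.simple_mem i, rfl⟩

/-- `m` lies in the invariant subring `ℤ[X]^H` for a subgroup `H ≤ W`. -/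
def IsInvariantUnder (H : Subgroup (V ≃ₗ[ℝ] V)) (hH : H ≤ C.W) (m : C.GroupRing) : Prop :=
  ∀ g (hg : g ∈ H), C.wAct g (hH hg) m = m

/-- `v` is of minimal length in its coset `v ⬝ W_{Π'}`. -/
def IsMinCosetRep (J : Set (Fin C.r)) (v : V ≃ₗ[ℝ] V) : Prop :=
  v ∈ C.W ∧ ∀ z ∈ C.parabolicSubgroup J, C.length v ≤ C.length (v * z)

/-- The subgroup generated by the simple reflections fixing a given vector. -/
def fixSubgroup (x : V) : Subgroup (V ≃ₗ[ℝ] V) :=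
  Subgroup.closure {g | ∃ i : Fin C.r, C.s (C.π i) x = x ∧ g = C.s (C.π i)}

end RootSystemData

namespace RootSystemData

variable {V : Type} [NormedAddCommGroup V] [InnerProductSpace ℝ V] [FiniteDimensional ℝ V]
variable (C : RootSystemData V)

/-! ### Basic lemmas -/

theorem root_inner_pos {α : V} (hα : α ∈ C.Φ) : 0 < ⟪α, α⟫_ℝ :=
  lt_of_le_of_ne real_inner_self_nonneg
    (Ne.symm fun h => C.root_ne_zero α hα ((@inner_self_eq_zero ℝ _ _ _ _ α).1 h))

theorem inner_pi_pos (i : Fin C.r) : 0 < ⟪C.π i, C.π i⟫_ℝ :=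
  C.root_inner_pos (C.simple_mem i)

theorem s_apply' {α : V} (hα : α ∈ C.Φ) (v : V) :
    C.s α v = v - pairing v α • α := C.s_apply α hα v

theorem s_s {α : V} (hα : α ∈ C.Φ) (v : V) : C.s α (C.s α v) = v := by
  have h0 : ⟪α, α⟫_ℝ ≠ 0 := ne_of_gt (C.root_inner_pos hα)
  rw [C.s_apply α hα v, C.s_apply α hα]
  rw [inner_sub_left, real_inner_smul_left]
  have h1 : 2 * (⟪v, α⟫_ℝ - 2 * ⟪v, α⟫_ℝ / ⟪α, α⟫_ℝ * ⟪α, α⟫_ℝ) / ⟪α, α⟫_ℝ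
      = -(2 * ⟪v, α⟫_ℝ / ⟪α, α⟫_ℝ) := by
    field_simp
    ring
  rw [h1, neg_smul, sub_neg_eq_add, sub_add_cancel]

theorem s_mul_s {α : V} (hα : α ∈ C.Φ) : C.s α * C.s α = 1 :=
  LinearEquiv.toLinearMap_injective (LinearMap.ext fun v => C.s_s hα v)

theorem s_inv {α : V} (hα : α ∈ C.Φ) : (C.s α)⁻¹ = C.s α :=
  inv_eq_of_mul_eq_one_right (C.s_mul_s hα)

theorem s_mem {α : V} (hα : α ∈ C.Φ) : C.s α ∈ C.W := by
  rw [C.W_eq]; exact Subgroup.subset_closure ⟨α, hα, rfl⟩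

theorem s_neg_self {α : V} (hα : α ∈ C.Φ) : C.s α α = -α := by
  have h0 : ⟪α, α⟫_ℝ ≠ 0 := ne_of_gt (C.root_inner_pos hα)
  rw [C.s_apply α hα α]
  rw [show 2 * ⟪α, α⟫_ℝ / ⟪α, α⟫_ℝ = 2 by field_simp]
  rw [two_smul]
  abel

/-- The subgroup of linear automorphisms preserving the root set. -/
private def rootStab : Subgroup (V ≃ₗ[ℝ] V) where
  carrier := {g | ∀ β ∈ C.Φ, g β ∈ C.Φ ∧ g⁻¹ β ∈ C.Φ}
  one_mem' := fun β hβ => ⟨hβ, by simpa using hβ⟩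
  mul_mem' := by
    intro a b ha hb
    intro β hβ
    constructor
    · exact (ha _ (hb _ hβ).1).1
    · have : (a * b)⁻¹ β = b⁻¹ (a⁻¹ β) := by rw [mul_inv_rev]; rfl
      rw [this]
      exact (hb _ (ha _ hβ).2).2
  inv_mem' := by
    intro a ha β hβ
    refine ⟨(ha β hβ).2, ?_⟩
    rw [inv_inv]
    exact (ha β hβ).1

theorem W_le_rootStab : C.W ≤ C.rootStab := by
  rw [C.W_eq]
  refine (Subgroup.closure_le _).2 ?_
  rintro g ⟨α, hα, rfl⟩
  intro β hβ
  refine ⟨C.refl_stable α hα β hβ, ?_⟩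
  rw [C.s_inv hα]
  exact C.refl_stable α hα β hβ

theorem W_root {g : V ≃ₗ[ℝ] V} (hg : g ∈ C.W) {α : V} (hα : α ∈ C.Φ) : g α ∈ C.Φ :=
  (C.W_le_rootStab hg α hα).1

/-! ### The cone of nonnegative combinations of simple roots -/

theorem isPos_zero : C.IsPos 0 :=
  ⟨fun _ => 0, fun _ => le_refl 0, by simp⟩

theorem isPos_add {x y : V} (hx : C.IsPos x) (hy : C.IsPos y) : C.IsPos (x + y) := by
  obtain ⟨c, hc, hcx⟩ := hx
  obtain ⟨d, hd, hdy⟩ := hy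
  refine ⟨fun i => c i + d i, fun i => add_nonneg (hc i) (hd i), ?_⟩
  rw [hcx, hdy, ← Finset.sum_add_distrib]
  simp [add_smul]

theorem isPos_smul {t : ℝ} {x : V} (ht : 0 ≤ t) (hx : C.IsPos x) : C.IsPos (t • x) := by
  obtain ⟨c, hc, hcx⟩ := hx
  refine ⟨fun i => t * c i, fun i => mul_nonneg ht (hc i), ?_⟩
  rw [hcx, Finset.smul_sum]
  simp [smul_smul]

theorem isPos_pi (i : Fin C.r) : C.IsPos (C.π i) := by
  refine ⟨fun k => if k = i then 1 else 0, fun k => by positivity, ?_⟩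
  simp [ite_smul]

theorem eq_zero_of_isPos_isNeg {x : V} (hx : C.IsPos x) (hx' : C.IsPos (-x)) : x = 0 := by
  obtain ⟨c, hc, hcx⟩ := hx
  obtain ⟨d, hd, hdx⟩ := hx'
  have hzero : ∑ i, (c i + d i) • C.π i = 0 := by
    simp only [add_smul]
    rw [Finset.sum_add_distrib, ← hcx, ← hdx]
    abel
  have hall := Fintype.linearIndependent_iff.1 C.simple_indep _ hzero
  have hc0 : ∀ i, c i = 0 := fun i => by have := hall i; have := hc i; have := hd i; linarith
  rw [hcx]
  exact Finset.sum_eq_zero fun i _ => by rw [hc0 i, zero_smul]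

theorem root_pos_or_neg {α : V} (hα : α ∈ C.Φ) : C.IsPos α ∨ C.IsNeg α :=
  C.pos_or_neg α hα

theorem neg_pi_not_isPos (i : Fin C.r) : ¬ C.IsPos (-(C.π i)) := fun h =>
  C.root_ne_zero _ (C.simple_mem i) (C.eq_zero_of_isPos_isNeg (C.isPos_pi i) h)

theorem inner_pi_nonneg {ν : V} (hν : C.IsDominant ν) (i : Fin C.r) : 0 ≤ ⟪ν, C.π i⟫_ℝ := by
  have h := hν i
  unfold pairing at h
  rcases div_nonneg_iff.1 h with ⟨h1, _⟩ | ⟨_, h2⟩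
  · linarith
  · exact absurd (lt_of_lt_of_le (C.inner_pi_pos i) h2) (by norm_num)

theorem dominant_inner_nonneg {ν x : V} (hν : C.IsDominant ν) (hx : C.IsPos x) :
    0 ≤ ⟪ν, x⟫_ℝ := by
  obtain ⟨c, hc, hcx⟩ := hx
  rw [hcx, inner_sum]
  refine Finset.sum_nonneg fun i _ => ?_
  rw [real_inner_smul_right]
  exact mul_nonneg (hc i) (C.inner_pi_nonneg hν i)

end RootSystemData


namespace RootSystemData

variable {V : Type} [NormedAddCommGroup V] [InnerProductSpace ℝ V] [FiniteDimensional ℝ V]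
variable (C : RootSystemData V)

/-! ### Conjugation of reflections -/

omit [FiniteDimensional ℝ V] in
theorem inv_apply_apply (g : V ≃ₗ[ℝ] V) (x : V) : g⁻¹ (g x) = x := g.symm_apply_apply x

omit [FiniteDimensional ℝ V] in
theorem apply_inv_apply (g : V ≃ₗ[ℝ] V) (x : V) : g (g⁻¹ x) = x := g.apply_symm_apply x

theorem s_conj {g : V ≃ₗ[ℝ] V} (hg : g ∈ C.W) {α : V} (hα : α ∈ C.Φ) :
    C.s (g α) = g * C.s α * g⁻¹ := by
  have hgα : g α ∈ C.Φ := C.W_root hg hα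
  refine LinearEquiv.toLinearMap_injective (LinearMap.ext fun v => ?_)
  show C.s (g α) v = g (C.s α (g⁻¹ v))
  rw [C.s_apply _ hgα v, C.s_apply _ hα (g⁻¹ v), map_sub, map_smul, apply_inv_apply]
  have h1 : ⟪v, g α⟫_ℝ = ⟪g⁻¹ v, α⟫_ℝ := by
    conv_lhs => rw [← apply_inv_apply g v]
    exact C.inner_invariant g hg _ _
  have h2 : ⟪g α, g α⟫_ℝ = ⟪α, α⟫_ℝ := C.inner_invariant g hg _ _
  rw [h1, h2]

theorem s_eq_s_neg {α : V} (hα : α ∈ C.Φ) (hnα : -α ∈ C.Φ) : C.s (-α) = C.s α := by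
  refine LinearEquiv.toLinearMap_injective (LinearMap.ext fun v => ?_)
  show C.s (-α) v = C.s α v
  rw [C.s_apply _ hnα v, C.s_apply _ hα v]
  rw [inner_neg_right, inner_neg_neg]
  rw [smul_neg, mul_neg, neg_div, neg_smul, neg_neg]

theorem neg_root_mem {α : V} (hα : α ∈ C.Φ) : -α ∈ C.Φ := by
  rw [← C.s_neg_self hα]
  exact C.refl_stable α hα α hα

/-! ### Simple reflections permute the other positive roots -/

theorem s_pi_pos (i : Fin C.r) {α : V} (hα : α ∈ C.Φ) (hpos : C.IsPos α)
    (hne : α ≠ C.π i) : C.IsPos (C.s (C.π i) α) := by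
  have hsΦ : C.s (C.π i) α ∈ C.Φ := C.refl_stable _ (C.simple_mem i) _ hα
  rcases C.root_pos_or_neg hsΦ with h | h
  · exact h
  · exfalso
    obtain ⟨c, hc0, hcα⟩ := hpos
    obtain ⟨d, hd0, hdα⟩ := h
    set p := pairing α (C.π i) with hp
    have hs : C.s (C.π i) α = α - p • C.π i := C.s_apply' (C.simple_mem i) α
    have hzero : ∑ k, ((c k + d k) - (if k = i then p else 0)) • C.π k = 0 := by
      simp only [sub_smul, add_smul, ite_smul, zero_smul]
      rw [Finset.sum_sub_distrib, Finset.sum_add_distrib, ← hcα, ← hdα]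
      rw [Finset.sum_ite_eq' Finset.univ i (fun k => p • C.π k)]
      simp only [Finset.mem_univ, if_true]
      rw [hs]
      abel
    have hall := Fintype.linearIndependent_iff.1 C.simple_indep _ hzero
    have hck : ∀ k, k ≠ i → c k = 0 := by
      intro k hk
      have := hall k
      rw [if_neg hk] at this
      have := hc0 k; have := hd0 k
      linarith [hall k]
    have hαpi : α = c i • C.π i := by
      rw [hcα]
      rw [Finset.sum_eq_single_of_mem i (Finset.mem_univ i)]
      intro k _ hk
      rw [hck k hk, zero_smul]
    rcases C.reduced (C.π i) (C.simple_mem i) (c i) (by rw [← hαpi]; exact hα) with h1 | h1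
    · exact hne (by rw [hαpi, h1, one_smul])
    · have := hc0 i
      rw [h1] at this
      linarith

/-! ### Words in simple reflections -/

theorem wordProd_nil : C.wordProd [] = 1 := rfl

theorem wordProd_cons (i : Fin C.r) (l : List (Fin C.r)) :
    C.wordProd (i :: l) = C.s (C.π i) * C.wordProd l := by
  simp [wordProd]

theorem wordProd_append (l₁ l₂ : List (Fin C.r)) :
    C.wordProd (l₁ ++ l₂) = C.wordProd l₁ * C.wordProd l₂ := by
  simp [wordProd]

theorem wordProd_mem (l : List (Fin C.r)) : C.wordProd l ∈ C.W := by
  induction l with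
  | nil => exact one_mem _
  | cons i l ih =>
    rw [C.wordProd_cons]
    exact mul_mem (C.s_mem (C.simple_mem i)) ih

end RootSystemData


namespace RootSystemData

variable {V : Type} [NormedAddCommGroup V] [InnerProductSpace ℝ V] [FiniteDimensional ℝ V]
variable (C : RootSystemData V)

/-! ### Generation by simple reflections -/

/-- The set of simple reflections. -/
private def simpleSet : Set (V ≃ₗ[ℝ] V) := {g | ∃ i : Fin C.r, g = C.s (C.π i)}

/-- The subgroup generated by simple reflections. -/
private def Ws : Subgroup (V ≃ₗ[ℝ] V) := Subgroup.closure C.simpleSet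

theorem Ws_le_W : C.Ws ≤ C.W := by
  refine (Subgroup.closure_le _).2 ?_
  rintro g ⟨i, rfl⟩
  exact C.s_mem (C.simple_mem i)

theorem span_pi : ⊤ ≤ Submodule.span ℝ (Set.range C.π) := by
  rw [← C.root_span]
  refine Submodule.span_le.2 fun α hα => ?_
  have hmem : ∀ c : Fin C.r → ℝ, (∑ i, c i • C.π i) ∈ Submodule.span ℝ (Set.range C.π) :=
    fun c => Submodule.sum_mem _ fun i _ =>
      Submodule.smul_mem _ _ (Submodule.subset_span ⟨i, rfl⟩)
  rcases C.pos_or_neg α hα with ⟨c, _, hc⟩ | ⟨c, _, hc⟩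
  · rw [hc]; exact hmem c
  · have : α = -(∑ i, c i • C.π i) := by rw [← hc, neg_neg]
    rw [this]
    exact Submodule.neg_mem _ (hmem c)

/-- The simple roots as a basis. -/
private def simpleBasis : Module.Basis (Fin C.r) ℝ V := Module.Basis.mk C.simple_indep C.span_pi

theorem simpleBasis_apply (i : Fin C.r) : C.simpleBasis i = C.π i := Module.Basis.mk_apply _ _ i

/-- The height of a vector: the sum of its coordinates in the simple-root basis. -/
private def ht (v : V) : ℝ := ∑ k, C.simpleBasis.coord k v

theorem ht_sum (c : Fin C.r → ℝ) : C.ht (∑ k, c k • C.π k) = ∑ k, c k := by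
  unfold ht
  have : ∀ k : Fin C.r, c k • C.π k = c k • C.simpleBasis k := by
    intro k; rw [C.simpleBasis_apply]
  simp only [this]
  refine Finset.sum_congr rfl fun k _ => ?_
  rw [map_sum]
  simp only [map_smul, Module.Basis.coord_apply, Module.Basis.repr_self_apply, smul_eq_mul]
  simp

theorem ht_pos_of_isPos {α : V} (hpos : C.IsPos α) (hne : α ≠ 0) : 0 < C.ht α := by
  obtain ⟨c, hc0, hcα⟩ := hpos
  rw [hcα, C.ht_sum]
  rcases lt_or_eq_of_le (Finset.sum_nonneg fun i _ => hc0 i) with h | h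
  · exact h
  · exfalso
    apply hne
    have hz := (Finset.sum_eq_zero_iff_of_nonneg (fun i _ => hc0 i)).1 h.symm
    rw [hcα]
    exact Finset.sum_eq_zero fun i _ => by rw [hz i (Finset.mem_univ i), zero_smul]

theorem ht_s_pi {α : V} (hα : α ∈ C.Φ) (i : Fin C.r) :
    C.ht (C.s (C.π i) α) = C.ht α - pairing α (C.π i) * C.ht (C.π i) := by
  rw [C.s_apply' (C.simple_mem i) α]
  unfold ht
  simp only [map_sub, map_smul, smul_eq_mul]
  rw [Finset.sum_sub_distrib, Finset.mul_sum]

theorem ht_pi (i : Fin C.r) : C.ht (C.π i) = 1 := by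
  have : C.π i = ∑ k, (if k = i then (1:ℝ) else 0) • C.π k := by
    simp [ite_smul]
  rw [this, C.ht_sum]
  simp

theorem pos_root_expr {α : V} (hα : α ∈ C.Φ) (hpos : C.IsPos α) :
    ∃ g ∈ C.Ws, ∃ i, α = g (C.π i) := by
  obtain ⟨n, hn⟩ : ∃ n : ℕ, C.ht α ≤ n := ⟨⌈C.ht α⌉₊, Nat.le_ceil _⟩
  induction n generalizing α with
  | zero =>
    exact absurd (lt_of_lt_of_le (C.ht_pos_of_isPos hpos (C.root_ne_zero α hα)) hn)
      (by norm_num)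
  | succ n ih =>
    have hex : ∃ i, 0 < ⟪α, C.π i⟫_ℝ := by
      by_contra h
      push_neg at h
      obtain ⟨c, hc0, hcα⟩ := hpos
      have hsum : ⟪(∑ i, c i • C.π i : V), α⟫_ℝ ≤ 0 := by
        rw [sum_inner]
        refine Finset.sum_nonpos fun i _ => ?_
        rw [real_inner_smul_left]
        have h1 : ⟪C.π i, α⟫_ℝ ≤ 0 := by rw [real_inner_comm]; exact h i
        exact mul_nonpos_iff.2 (Or.inl ⟨hc0 i, h1⟩)
      rw [← hcα] at hsum
      rw [real_inner_comm] at hsum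
      exact absurd (lt_of_lt_of_le (C.root_inner_pos hα) hsum) (by norm_num)
    obtain ⟨i, hi⟩ := hex
    by_cases he : α = C.π i
    · exact ⟨1, one_mem _, i, by rw [he]; rfl⟩
    · set β := C.s (C.π i) α with hβ
      have hβΦ : β ∈ C.Φ := C.refl_stable _ (C.simple_mem i) _ hα
      have hβpos : C.IsPos β := C.s_pi_pos i hα hpos he
      have hp1 : 1 ≤ pairing α (C.π i) := by
        obtain ⟨m, hm⟩ := C.crystallographic (C.π i) (C.simple_mem i) α hα
        have hppos : (0:ℝ) < 2 * ⟪α, C.π i⟫_ℝ / ⟪C.π i, C.π i⟫_ℝ :=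
          div_pos (by linarith) (C.inner_pi_pos i)
        rw [hm] at hppos
        have hm1 : (1:ℤ) ≤ m := by
          have h0 : (0:ℤ) < m := by exact_mod_cast hppos
          omega
        show (1:ℝ) ≤ 2 * ⟪α, C.π i⟫_ℝ / ⟪C.π i, C.π i⟫_ℝ
        rw [hm]
        exact_mod_cast hm1
      have hhtβ : C.ht β ≤ n := by
        rw [hβ, C.ht_s_pi hα i, C.ht_pi, mul_one]
        push_cast at hn ⊢
        linarith
      obtain ⟨g, hg, i', hexpr⟩ := ih hβΦ hβpos hhtβ
      refine ⟨C.s (C.π i) * g, mul_mem (Subgroup.subset_closure ⟨i, rfl⟩) hg, i', ?_⟩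
      have : α = C.s (C.π i) β := by rw [hβ, C.s_s (C.simple_mem i)]
      rw [this, hexpr]
      rfl

theorem s_mem_Ws {α : V} (hα : α ∈ C.Φ) : C.s α ∈ C.Ws := by
  have key : ∀ β ∈ C.Φ, C.IsPos β → C.s β ∈ C.Ws := by
    intro β hβ hpos
    obtain ⟨g, hg, i, hexpr⟩ := C.pos_root_expr hβ hpos
    rw [hexpr, C.s_conj (C.Ws_le_W hg) (C.simple_mem i)]
    exact mul_mem (mul_mem hg (Subgroup.subset_closure ⟨i, rfl⟩)) (inv_mem hg)
  rcases C.root_pos_or_neg hα with h | h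
  · exact key α hα h
  · have hnα : -α ∈ C.Φ := C.neg_root_mem hα
    rw [← C.s_eq_s_neg hα hnα]
    exact key (-α) hnα h

theorem mem_Ws {g : V ≃ₗ[ℝ] V} (hg : g ∈ C.W) : g ∈ C.Ws := by
  have hle : C.W ≤ C.Ws := by
    rw [C.W_eq]
    refine (Subgroup.closure_le _).2 ?_
    rintro x ⟨α, hα, rfl⟩
    exact C.s_mem_Ws hα
  exact hle hg

theorem exists_word {g : V ≃ₗ[ℝ] V} (hg : g ∈ C.W) : ∃ l : List (Fin C.r), C.wordProd l = g := by
  have hg' : g ∈ (C.Ws).toSubmonoid := C.mem_Ws hg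
  rw [Ws, Subgroup.closure_toSubmonoid] at hg'
  obtain ⟨L, hL, hLprod⟩ := Submonoid.exists_list_of_mem_closure hg'
  have hL' : ∀ x ∈ L, ∃ i : Fin C.r, x = C.s (C.π i) := by
    intro x hx
    rcases hL x hx with h | h
    · exact h
    · obtain ⟨i, hi⟩ : ∃ i, x⁻¹ = C.s (C.π i) := h
      exact ⟨i, by rw [← inv_inv x, hi, C.s_inv (C.simple_mem i)]⟩
  clear hL hg hg'
  subst hLprod
  induction L with
  | nil => exact ⟨[], rfl⟩
  | cons x L ih =>
    obtain ⟨i, hi⟩ := hL' x List.mem_cons_self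
    obtain ⟨t, ht⟩ := ih fun y hy => hL' y (List.mem_cons_of_mem x hy)
    exact ⟨i :: t, by rw [C.wordProd_cons, ht, hi, List.prod_cons]⟩

end RootSystemData


namespace RootSystemData

variable {V : Type} [NormedAddCommGroup V] [InnerProductSpace ℝ V] [FiniteDimensional ℝ V]
variable (C : RootSystemData V)

/-! ### The deletion argument -/

theorem cross : ∀ (t : List (Fin C.r)) (β : V), β ∈ C.Φ → C.IsPos β →
    C.IsNeg (C.wordProd t β) →
    ∃ t₁ k t₂, t = t₁ ++ k :: t₂ ∧ C.wordProd t₂ β = C.π k := by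
  intro t
  induction t with
  | nil =>
    intro β hβ hpos hneg
    have hβ0 : β = 0 := C.eq_zero_of_isPos_isNeg hpos hneg
    exact absurd hβ0 (C.root_ne_zero β hβ)
  | cons k t ih =>
    intro β hβ hpos hneg
    have hγΦ : C.wordProd t β ∈ C.Φ := C.W_root (C.wordProd_mem t) hβ
    rcases C.root_pos_or_neg hγΦ with hp | hn
    · have happ : C.wordProd (k :: t) β = C.s (C.π k) (C.wordProd t β) := by
        rw [C.wordProd_cons]; rfl
      by_cases hek : C.wordProd t β = C.π k
      · exact ⟨[], k, t, rfl, hek⟩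
      · exfalso
        have h1 : C.IsPos (C.s (C.π k) (C.wordProd t β)) := C.s_pi_pos k hγΦ hp hek
        have h2 : C.IsNeg (C.s (C.π k) (C.wordProd t β)) := by rw [← happ]; exact hneg
        have h0 := C.eq_zero_of_isPos_isNeg h1 h2
        exact C.root_ne_zero _ (C.refl_stable _ (C.simple_mem k) _ hγΦ) h0
    · obtain ⟨t₁, k', t₂, ht, he⟩ := ih β hβ hpos hn
      exact ⟨k :: t₁, k', t₂, by rw [ht]; rfl, he⟩

theorem star_aux : ∀ n : ℕ, ∀ l : List (Fin C.r), l.length ≤ n →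
    (∀ i, C.IsPos (C.wordProd l (C.π i))) → C.wordProd l = 1 := by
  intro n
  induction n with
  | zero =>
    intro l hl _
    have hnil : l = [] := List.length_eq_zero_iff.1 (Nat.le_zero.1 hl)
    subst hnil
    rfl
  | succ n ih =>
    intro l hl hpos
    rcases List.eq_nil_or_concat l with rfl | ⟨t, i, rfl⟩
    · rfl
    · simp only [List.concat_eq_append] at hl hpos ⊢
      have hneg : C.IsNeg (C.wordProd t (C.π i)) := by
        have h1 : C.wordProd (t ++ [i]) (C.π i) = -(C.wordProd t (C.π i)) := by
          rw [C.wordProd_append]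
          show C.wordProd t (C.wordProd [i] (C.π i)) = _
          have : C.wordProd [i] (C.π i) = -(C.π i) := by
            rw [show C.wordProd [i] = C.s (C.π i) * 1 from C.wordProd_cons i [], mul_one]
            exact C.s_neg_self (C.simple_mem i)
          rw [this, map_neg]
        have h2 := hpos i
        rw [h1] at h2
        exact h2
      obtain ⟨t₁, k, t₂, rfl, hk⟩ := C.cross t (C.π i) (C.simple_mem i) (C.isPos_pi i) hneg
      have hw2 : C.wordProd t₂ ∈ C.W := C.wordProd_mem t₂
      have hsk : C.s (C.π k) = C.wordProd t₂ * C.s (C.π i) * (C.wordProd t₂)⁻¹ := by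
        rw [← hk]
        exact C.s_conj hw2 (C.simple_mem i)
      have hEq : C.wordProd ((t₁ ++ k :: t₂) ++ [i]) = C.wordProd (t₁ ++ t₂) := by
        rw [C.wordProd_append, C.wordProd_append, C.wordProd_cons, C.wordProd_append]
        rw [show C.wordProd [i] = C.s (C.π i) * 1 from C.wordProd_cons i [], mul_one]
        rw [hsk]
        have hss := C.s_mul_s (C.simple_mem i)
        calc C.wordProd t₁ * (C.wordProd t₂ * C.s (C.π i) * (C.wordProd t₂)⁻¹ * C.wordProd t₂) *
              C.s (C.π i)
            = C.wordProd t₁ * C.wordProd t₂ * (C.s (C.π i) * C.s (C.π i)) := by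
              rw [mul_assoc (C.wordProd t₂ * C.s (C.π i)), inv_mul_cancel, mul_one]
              group
          _ = C.wordProd t₁ * C.wordProd t₂ := by rw [hss, mul_one]
      have hlen : (t₁ ++ t₂).length ≤ n := by
        simp only [List.length_append, List.length_cons] at hl ⊢
        omega
      have hres := ih (t₁ ++ t₂) hlen (fun i' => by rw [← hEq]; exact hpos i')
      rw [hEq, hres]

theorem eq_one_of_simple_pos {g : V ≃ₗ[ℝ] V} (hg : g ∈ C.W)
    (h : ∀ i, C.IsPos (g (C.π i))) : g = 1 := by
  obtain ⟨l, rfl⟩ := C.exists_word hg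
  exact C.star_aux l.length l le_rfl h

/-! ### Inversion sets -/

/-- The set of positive roots sent to negative roots by `g`. -/
private def negRootSet (g : V ≃ₗ[ℝ] V) : Finset V :=
  C.Φ.filter (fun α => C.IsPos α ∧ C.IsNeg (g α))

theorem negRootSet_card_lt {g : V ≃ₗ[ℝ] V} (hg : g ∈ C.W) (i : Fin C.r)
    (h : C.IsNeg (g (C.π i))) :
    (C.negRootSet (g * C.s (C.π i))).card < (C.negRootSet g).card := by
  have hmem : C.π i ∈ C.negRootSet g :=
    Finset.mem_filter.2 ⟨C.simple_mem i, C.isPos_pi i, h⟩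
  have hcard : (C.negRootSet (g * C.s (C.π i))).card ≤ ((C.negRootSet g).erase (C.π i)).card := by
    refine Finset.card_le_card_of_injOn (fun α => C.s (C.π i) α) ?_ ?_
    · intro α hα
      obtain ⟨hαΦ, hαpos, hαneg⟩ := Finset.mem_filter.1 hα
      have hne : α ≠ C.π i := by
        intro heq
        rw [heq] at hαneg
        have h1 : (g * C.s (C.π i)) (C.π i) = -(g (C.π i)) := by
          show g (C.s (C.π i) (C.π i)) = _
          rw [C.s_neg_self (C.simple_mem i), map_neg]
        rw [h1] at hαneg
        have h2 : C.IsPos (-(-(g (C.π i)))) := hαneg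
        rw [neg_neg] at h2
        exact C.root_ne_zero _ (C.W_root hg (C.simple_mem i)) (C.eq_zero_of_isPos_isNeg h2 h)
      have hsΦ : C.s (C.π i) α ∈ C.Φ := C.refl_stable _ (C.simple_mem i) _ hαΦ
      have hspos : C.IsPos (C.s (C.π i) α) := C.s_pi_pos i hαΦ hαpos hne
      have hsne : C.s (C.π i) α ≠ C.π i := by
        intro heq
        have : α = -(C.π i) := by
          rw [← C.s_s (C.simple_mem i) α, heq, C.s_neg_self (C.simple_mem i)]
        rw [this] at hαpos
        exact C.neg_pi_not_isPos i hαpos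
      refine Finset.mem_erase.2 ⟨hsne, Finset.mem_filter.2 ⟨hsΦ, hspos, ?_⟩⟩
      exact hαneg
    · intro a _ b _ hab
      exact (C.s (C.π i)).injective hab
  have herase : ((C.negRootSet g).erase (C.π i)).card < (C.negRootSet g).card :=
    Finset.card_erase_lt_of_mem hmem
  omega

/-! ### A dominant weight dominates its orbit -/

theorem isPos_sub_orbit_aux : ∀ n : ℕ, ∀ y ∈ C.W, (C.negRootSet y).card ≤ n →
    ∀ ω' : V, C.IsDominant ω' → C.IsPos (ω' - y ω') := by
  intro n
  induction n with
  | zero =>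
    intro y hy hcard ω' hdom
    by_cases hc : ∀ i, C.IsPos (y (C.π i))
    · rw [C.eq_one_of_simple_pos hy hc]
      simpa using C.isPos_zero
    · exfalso
      push_neg at hc
      obtain ⟨i, hi⟩ := hc
      have hneg : C.IsNeg (y (C.π i)) :=
        (C.root_pos_or_neg (C.W_root hy (C.simple_mem i))).resolve_left hi
      have : C.π i ∈ C.negRootSet y :=
        Finset.mem_filter.2 ⟨C.simple_mem i, C.isPos_pi i, hneg⟩
      have := Finset.card_pos.2 ⟨_, this⟩
      omega
  | succ n ih =>
    intro y hy hcard ω' hdom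
    by_cases hc : ∀ i, C.IsPos (y (C.π i))
    · rw [C.eq_one_of_simple_pos hy hc]
      simpa using C.isPos_zero
    · push_neg at hc
      obtain ⟨i, hi⟩ := hc
      have hneg : C.IsNeg (y (C.π i)) :=
        (C.root_pos_or_neg (C.W_root hy (C.simple_mem i))).resolve_left hi
      set y' := y * C.s (C.π i) with hy'
      have hy'W : y' ∈ C.W := mul_mem hy (C.s_mem (C.simple_mem i))
      have hcard' : (C.negRootSet y').card ≤ n := by
        have hlt := C.negRootSet_card_lt hy i hneg
        rw [← hy'] at hlt
        omega
      have hIH : C.IsPos (ω' - y' ω') := ih y' hy'W hcard' ω' hdom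
      set p := pairing ω' (C.π i) with hp
      have hpnn : 0 ≤ p := hdom i
      have hsω : C.s (C.π i) ω' = ω' - p • C.π i := C.s_apply' (C.simple_mem i) ω'
      have hy'ω : y' ω' = y ω' - p • y (C.π i) := by
        have h1 : y (C.s (C.π i) ω') = y' (C.s (C.π i) (C.s (C.π i) ω')) := by
          rw [hy']
          show y _ = y (C.s (C.π i) (C.s (C.π i) (C.s (C.π i) ω')))
          rw [C.s_s (C.simple_mem i)]
        rw [C.s_s (C.simple_mem i)] at h1
        rw [← h1, hsω, map_sub, map_smul]
      have hE : ω' - y ω' = (ω' - y' ω') + p • (-(y (C.π i))) := by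
        rw [hy'ω, smul_neg]
        abel
      rw [hE]
      exact C.isPos_add hIH (C.isPos_smul hpnn hneg)

theorem isPos_sub_orbit {y : V ≃ₗ[ℝ] V} (hy : y ∈ C.W) {ω' : V} (hdom : C.IsDominant ω') :
    C.IsPos (ω' - y ω') :=
  C.isPos_sub_orbit_aux (C.negRootSet y).card y hy le_rfl ω' hdom

/-! ### Existence of a dominant representative in each orbit -/

private def negInnerSet (x : V) : Finset V :=
  C.Φ.filter (fun α => C.IsPos α ∧ ⟪x, α⟫_ℝ < 0)

theorem exists_dominant_rep_aux : ∀ n : ℕ, ∀ x : V, (C.negInnerSet x).card ≤ n →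
    ∃ g ∈ C.W, C.IsDominant (g x) := by
  intro n
  induction n with
  | zero =>
    intro x hcard
    refine ⟨1, one_mem _, fun i => ?_⟩
    show 0 ≤ pairing x (C.π i)
    have hnn : 0 ≤ ⟪x, C.π i⟫_ℝ := by
      by_contra hlt
      push_neg at hlt
      have : C.π i ∈ C.negInnerSet x :=
        Finset.mem_filter.2 ⟨C.simple_mem i, C.isPos_pi i, hlt⟩
      have := Finset.card_pos.2 ⟨_, this⟩
      omega
    unfold pairing
    exact div_nonneg (by linarith) (le_of_lt (C.inner_pi_pos i))
  | succ n ih =>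
    intro x hcard
    by_cases hc : ∀ i, 0 ≤ ⟪x, C.π i⟫_ℝ
    · refine ⟨1, one_mem _, fun i => ?_⟩
      show 0 ≤ pairing x (C.π i)
      unfold pairing
      have := hc i
      exact div_nonneg (by linarith) (le_of_lt (C.inner_pi_pos i))
    · push_neg at hc
      obtain ⟨i, hi⟩ := hc
      set x' := C.s (C.π i) x with hx'
      have hinner : ∀ α : V, ⟪x', α⟫_ℝ = ⟪x, C.s (C.π i) α⟫_ℝ := by
        intro α
        have := C.inner_invariant _ (C.s_mem (C.simple_mem i)) x' α
        rw [hx'] at this ⊢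
        rw [← this, C.s_s (C.simple_mem i)]
      have hcard' : (C.negInnerSet x').card ≤ n := by
        have hmem : C.π i ∈ C.negInnerSet x :=
          Finset.mem_filter.2 ⟨C.simple_mem i, C.isPos_pi i, hi⟩
        have hle : (C.negInnerSet x').card ≤ ((C.negInnerSet x).erase (C.π i)).card := by
          refine Finset.card_le_card_of_injOn (fun α => C.s (C.π i) α) ?_ ?_
          · intro α hα
            obtain ⟨hαΦ, hαpos, hαneg⟩ := Finset.mem_filter.1 hα
            have hne : α ≠ C.π i := by
              rintro rfl
              rw [hinner, C.s_neg_self (C.simple_mem i), inner_neg_right] at hαneg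
              linarith
            have hsΦ : C.s (C.π i) α ∈ C.Φ := C.refl_stable _ (C.simple_mem i) _ hαΦ
            have hspos : C.IsPos (C.s (C.π i) α) := C.s_pi_pos i hαΦ hαpos hne
            have hsne : C.s (C.π i) α ≠ C.π i := by
              intro heq
              have : α = -(C.π i) := by
                rw [← C.s_s (C.simple_mem i) α, heq, C.s_neg_self (C.simple_mem i)]
              rw [this] at hαpos
              exact C.neg_pi_not_isPos i hαpos
            refine Finset.mem_erase.2 ⟨hsne, Finset.mem_filter.2 ⟨hsΦ, hspos, ?_⟩⟩
            rw [← hinner]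
            exact hαneg
          · intro a _ b _ hab
            exact (C.s (C.π i)).injective hab
        have := Finset.card_erase_lt_of_mem hmem
        omega
      obtain ⟨g, hgW, hgdom⟩ := ih x' hcard'
      refine ⟨g * C.s (C.π i), mul_mem hgW (C.s_mem (C.simple_mem i)), ?_⟩
      show C.IsDominant (g (C.s (C.π i) x))
      exact hgdom

theorem exists_dominant_rep (x : V) : ∃ g ∈ C.W, C.IsDominant (g x) :=
  C.exists_dominant_rep_aux (C.negInnerSet x).card x le_rfl

end RootSystemData


/-- Let `ϖ ∈ X` be dominant with `(ϖ, α_j∨) > 1` for some simple `α_j`, and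
let `λ = wϖ` with `w` of minimal length.  Then every `μ ∈ w(ϖ - ω_j) + Wω_j` satisfies
`(μ,μ) ≤ (ϖ,ϖ)`; if `(μ,μ) = (ϖ,ϖ)` then `μ = vϖ` for some `v ≥ w`; and consequently
`μ ≤ₐ λ`. -/
theorem statement_7
    {V : Type} [NormedAddCommGroup V] [InnerProductSpace ℝ V] [FiniteDimensional ℝ V]
    (C : RootSystemData V)
    (ϖ lam : V) (hX : ϖ ∈ C.X) (hdom : C.IsDominant ϖ)
    (j : Fin C.r) (hj : 1 < pairing ϖ (C.π j))
    (w : V ≃ₗ[ℝ] V) (hw : w ∈ C.W) (hlam : lam = w ϖ)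
    (hmin : ∀ u ∈ C.W, u ϖ = lam → C.length w ≤ C.length u)
    (μ : V) (z : V ≃ₗ[ℝ] V) (hz : z ∈ C.W) (hμ : μ = w (ϖ - C.ω j) + z (C.ω j)) :
    ⟪μ, μ⟫_ℝ ≤ ⟪ϖ, ϖ⟫_ℝ ∧
    (⟪μ, μ⟫_ℝ = ⟪ϖ, ϖ⟫_ℝ → ∃ v ∈ C.W, C.BruhatLE w v ∧ μ = v ϖ) ∧
    C.AntiLE μ lam := by
  classical
  set ν : V := ϖ - C.ω j with hν
  have hpairω : ∀ i, pairing (C.ω j) (C.π i) = if j = i then 1 else 0 := fun i => C.fund j i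
  have hωdom : C.IsDominant (C.ω j) := by
    intro i
    rw [hpairω i]
    split <;> norm_num
  have hpairν : ∀ i, pairing ν (C.π i) = pairing ϖ (C.π i) - (if j = i then 1 else 0) := by
    intro i
    rw [← hpairω i]
    unfold pairing
    rw [hν, inner_sub_left]
    ring
  have hνdom : C.IsDominant ν := by
    intro i
    rw [hpairν i]
    by_cases h : j = i
    · rw [if_pos h, ← h]
      linarith
    · rw [if_neg h]
      have := hdom i
      linarith
  set y : V ≃ₗ[ℝ] V := w⁻¹ * z with hy
  have hyW : y ∈ C.W := mul_mem (inv_mem hw) hz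
  set η : V := y (C.ω j) with hη
  obtain ⟨c, hc0, hcrep⟩ := C.isPos_sub_orbit hyW hωdom
  have hinvy : ⟪η, η⟫_ℝ = ⟪C.ω j, C.ω j⟫_ℝ := C.inner_invariant y hyW _ _
  have e1 : ⟪w ν, w ν⟫_ℝ = ⟪ν, ν⟫_ℝ := C.inner_invariant w hw _ _
  have e2 : ⟪z (C.ω j), z (C.ω j)⟫_ℝ = ⟪C.ω j, C.ω j⟫_ℝ := C.inner_invariant z hz _ _
  have e3 : ⟪w ν, z (C.ω j)⟫_ℝ = ⟪ν, η⟫_ℝ := by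
    have h := C.inner_invariant w⁻¹ (inv_mem hw) (w ν) (z (C.ω j))
    rw [← h, RootSystemData.inv_apply_apply]
    rfl
  have hsplit : ⟪μ, μ⟫_ℝ = ⟪ν, ν⟫_ℝ + 2 * ⟪ν, η⟫_ℝ + ⟪C.ω j, C.ω j⟫_ℝ := by
    rw [hμ, real_inner_add_add_self, e1, e2, e3]
  have hϖd : ϖ = ν + C.ω j := by rw [hν]; abel
  have hϖsplit : ⟪ϖ, ϖ⟫_ℝ = ⟪ν, ν⟫_ℝ + 2 * ⟪ν, C.ω j⟫_ℝ + ⟪C.ω j, C.ω j⟫_ℝ := by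
    conv_lhs => rw [hϖd]
    rw [real_inner_add_add_self]
  have hT : ⟪ν, C.ω j⟫_ℝ - ⟪ν, η⟫_ℝ = ∑ i, c i * ⟪ν, C.π i⟫_ℝ := by
    rw [← inner_sub_right, hcrep, inner_sum]
    simp only [real_inner_smul_right]
  have hterm : ∀ i, 0 ≤ c i * ⟪ν, C.π i⟫_ℝ := fun i =>
    mul_nonneg (hc0 i) (C.inner_pi_nonneg hνdom i)
  have hTnn : 0 ≤ ∑ i, c i * ⟪ν, C.π i⟫_ℝ := Finset.sum_nonneg fun i _ => hterm i
  have hdiff : ⟪ϖ, ϖ⟫_ℝ - ⟪μ, μ⟫_ℝ = 2 * ∑ i, c i * ⟪ν, C.π i⟫_ℝ := by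
    rw [hϖsplit, hsplit, ← hT]
    ring
  have part1 : ⟪μ, μ⟫_ℝ ≤ ⟪ϖ, ϖ⟫_ℝ := by linarith
  have hkey : (∑ i, c i * ⟪ν, C.π i⟫_ℝ) = 0 → μ = w ϖ := by
    intro hzero
    have hz0 := (Finset.sum_eq_zero_iff_of_nonneg (fun i _ => hterm i)).1 hzero
    have hνπj : 0 < ⟪ν, C.π j⟫_ℝ := by
      have hp : 0 < pairing ν (C.π j) := by
        rw [hpairν j, if_pos rfl]
        linarith
      by_contra hle
      push_neg at hle
      have hple : pairing ν (C.π j) ≤ 0 := by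
        unfold pairing
        exact div_nonpos_iff.2 (Or.inr ⟨by linarith, le_of_lt (C.inner_pi_pos j)⟩)
      linarith
    have hcj : c j = 0 := by
      rcases mul_eq_zero.1 (hz0 j (Finset.mem_univ j)) with h | h
      · exact h
      · exact absurd h (ne_of_gt hνπj)
    have hinner0 : ⟪C.ω j - η, C.ω j⟫_ℝ = 0 := by
      rw [hcrep, sum_inner]
      refine Finset.sum_eq_zero fun i _ => ?_
      rw [real_inner_smul_left]
      by_cases h : i = j
      · rw [h, hcj, zero_mul]
      · have h0 : ⟪C.ω j, C.π i⟫_ℝ = 0 := by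
          have hf := C.fund j i
          rw [if_neg (Ne.symm h)] at hf
          rcases div_eq_zero_iff.1 hf with h2 | h2
          · linarith
          · exact absurd h2 (ne_of_gt (C.inner_pi_pos i))
        rw [real_inner_comm, h0, mul_zero]
    have hinner1 : ⟪C.ω j - η, C.ω j + η⟫_ℝ = 0 := by
      rw [inner_add_right, inner_sub_left, inner_sub_left, hinvy,
        real_inner_comm (C.ω j) η]
      ring
    have hxx : ⟪C.ω j - η, C.ω j - η⟫_ℝ = 0 := by
      rw [inner_sub_right]
      have h1 : ⟪C.ω j - η, η⟫_ℝ = -⟪C.ω j - η, C.ω j⟫_ℝ + ⟪C.ω j - η, C.ω j + η⟫_ℝ := by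
        rw [inner_add_right]
        ring
      rw [h1, hinner0, hinner1]
      ring
    have hηω : η = C.ω j := by
      have h1 : C.ω j - η = 0 := inner_self_eq_zero.1 hxx
      rw [sub_eq_zero] at h1
      exact h1.symm
    have hzω : z (C.ω j) = w (C.ω j) := by
      have h1 : w η = z (C.ω j) := by
        rw [hη, hy]
        show w ((w⁻¹ * z) (C.ω j)) = z (C.ω j)
        rw [show ((w⁻¹ * z) (C.ω j)) = w⁻¹ (z (C.ω j)) from rfl,
          RootSystemData.apply_inv_apply]
      rw [← h1, hηω]
    rw [hμ, hzω, ← map_add, ← hϖd]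
  refine ⟨part1, ?_, ?_⟩
  · intro heq
    have hzero : (∑ i, c i * ⟪ν, C.π i⟫_ℝ) = 0 := by linarith
    exact ⟨w, hw, Relation.ReflTransGen.refl, hkey hzero⟩
  · show C.ExcLE (-μ) (-lam)
    rcases eq_or_lt_of_le hTnn with hzero | hpos
    · have hmu_lam : μ = lam := by rw [hkey hzero.symm, hlam]
      obtain ⟨g₀, hg₀W, hg₀dom⟩ := C.exists_dominant_rep (-ϖ)
      refine Or.inr ⟨g₀ (-ϖ), C.X_stable g₀ hg₀W _ (neg_mem hX), hg₀dom,
        w * g₀⁻¹, mul_mem hw (inv_mem hg₀W), w * g₀⁻¹, mul_mem hw (inv_mem hg₀W),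
        Relation.ReflTransGen.refl, ?_, ?_⟩
      · rw [hmu_lam, hlam]
        show -(w ϖ) = w (g₀⁻¹ (g₀ (-ϖ)))
        rw [RootSystemData.inv_apply_apply, map_neg]
      · rw [hlam]
        show -(w ϖ) = w (g₀⁻¹ (g₀ (-ϖ)))
        rw [RootSystemData.inv_apply_apply, map_neg]
    · refine Or.inl ?_
      have h1 : ⟪-μ, -μ⟫_ℝ = ⟪μ, μ⟫_ℝ := inner_neg_neg μ μ
      have h2 : ⟪-lam, -lam⟫_ℝ = ⟪ϖ, ϖ⟫_ℝ := by
        rw [inner_neg_neg lam lam, hlam]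
        exact C.inner_invariant w hw _ _
      rw [h1, h2]
      linarith
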